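/- Let T be a coarsely oriented tree, and let β₀ > 0 and M > 0 be such that |h(u) − h(v)| ≤ M for every edge {u,v} of T, and every vertex of T has at least two neighbors whose height exceeds its own by at least β₀ and at least two neighbors whose height is smaller by at least β₀. Then for every vertex v, every neighbor w of v with h(w) − h(v) ≥ β₀, and every β with 0 ≤ β ≤ β₀, there exists a map r : ℕ → V(T) with r(0) = v, r(1) = w, d(r(n), r(m)) = |n − m| for all n, m (a geodesic ray), and |h(r(n)) − h(v) − β·n| ≤ M for all n ∈ ℕ. -/

import Mathlib

open SimpleGraph

namespace SlopeRay

variable {V : Type*} {G : SimpleGraph V}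

/-- The walk along `f` from index `n` to `n + k`. -/
def rayWalk (f : ℕ → V) (hadj : ∀ n, G.Adj (f n) (f (n+1))) (n : ℕ) :
    (k : ℕ) → G.Walk (f n) (f (n+k))
  | 0 => SimpleGraph.Walk.nil
  | (k+1) => (rayWalk f hadj n k).concat (hadj (n+k))

lemma length_rayWalk (f : ℕ → V) (hadj : ∀ n, G.Adj (f n) (f (n+1))) (n k : ℕ) :
    (rayWalk f hadj n k).length = k := by
  induction k with
  | zero => rfl
  | succ k ih => simp [rayWalk, Walk.length_concat, ih]

lemma mem_support_rayWalk (f : ℕ → V) (hadj : ∀ n, G.Adj (f n) (f (n+1))) (n k : ℕ) (x : V) :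
    x ∈ (rayWalk f hadj n k).support ↔ ∃ j ≤ k, x = f (n+j) := by
  induction k with
  | zero =>
    constructor
    · intro hx
      simp [rayWalk] at hx
      exact ⟨0, le_rfl, hx⟩
    · rintro ⟨j, hj, rfl⟩
      have : j = 0 := Nat.le_zero.mp hj
      subst this
      simp [rayWalk]
  | succ k ih =>
    simp only [rayWalk, Walk.support_concat, List.concat_eq_append, List.mem_append,
      List.mem_singleton, ih]
    constructor
    · rintro (⟨j, hj, rfl⟩ | rfl)
      · exact ⟨j, by omega, rfl⟩
      · exact ⟨k+1, le_rfl, rfl⟩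
    · rintro ⟨j, hj, rfl⟩
      rcases Nat.lt_or_ge j (k+1) with hj' | hj'
      · exact Or.inl ⟨j, by omega, rfl⟩
      · have : j = k + 1 := by omega
        subst this; exact Or.inr rfl

lemma rayWalk_isPath (hT : G.IsTree) (f : ℕ → V) (hadj : ∀ n, G.Adj (f n) (f (n+1)))
    (hnb : ∀ n, f (n+2) ≠ f n) : ∀ k n, (rayWalk f hadj n k).IsPath := by
  intro k
  induction k using Nat.strong_induction_on with
  | _ k IH =>
    match k with
    | 0 => intro n; simp [rayWalk]
    | (k+1) =>
      intro n
      have hp : (rayWalk f hadj n k).IsPath := IH k (by omega) n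
      have hns : f (n+(k+1)) ∉ (rayWalk f hadj n k).support := by
        intro hmem
        rw [mem_support_rayWalk] at hmem
        obtain ⟨j, hj, hx⟩ := hmem
        rcases Nat.lt_or_ge j k with hjk | hjk
        · rcases Nat.lt_or_ge j (k-1) with hjk' | hjk'
          · -- j ≤ k - 2 : use uniqueness of paths
            have hcast : n + j + (k - j) = n + k := by omega
            have hp1 : ((rayWalk f hadj (n+j) (k-j)).copy rfl (congrArg f hcast)).IsPath := by
              rw [Walk.isPath_copy]
              exact IH (k-j) (by omega) (n+j)
            have hadj' : G.Adj (f (n+j)) (f (n+k)) := by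
              have h2 := hadj (n+k)
              rw [show n + k + 1 = n + (k+1) by omega, hx] at h2
              exact h2.symm
            have hp2 : (Walk.cons hadj' Walk.nil).IsPath := by
              simp [Walk.cons_isPath_iff, hadj'.ne]
            obtain ⟨-, huniq⟩ := isTree_iff_existsUnique_path.mp hT
            obtain ⟨p0, -, hu⟩ := huniq (f (n+j)) (f (n+k))
            have heq := (hu _ hp1).trans (hu _ hp2).symm
            have hl1 := congrArg Walk.length heq
            rw [Walk.length_copy, length_rayWalk] at hl1
            simp only [Walk.length_cons, Walk.length_nil] at hl1
            omega
          · -- j = k - 1 : contradicts non-backtracking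
            have hjk2 : j + 1 = k := by omega
            have := hnb (n + j)
            rw [show n + j + 2 = n + (k+1) by omega] at this
            exact this hx
        · -- j = k : contradicts irreflexivity
          have : j = k := by omega
          subst this
          have h2 := hadj (n + j)
          rw [show n + j + 1 = n + (j+1) by omega, hx] at h2
          exact h2.ne rfl
      have : (rayWalk f hadj n (k+1)) = (rayWalk f hadj n k).concat (hadj (n+k)) := rfl
      rw [this, Walk.isPath_def, Walk.support_concat]
      simp only [List.concat_eq_append, List.nodup_append, List.nodup_singleton,
        List.mem_singleton, true_and]
      refine ⟨hp.support_nodup, ?_⟩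
      intro a ha hq
      rintro rfl rfl
      exact hns ha

lemma rayWalk_dist (hT : G.IsTree) (f : ℕ → V) (hadj : ∀ n, G.Adj (f n) (f (n+1)))
    (hnb : ∀ n, f (n+2) ≠ f n) (n k : ℕ) : G.dist (f n) (f (n+k)) = k := by
  classical
  have hle : G.dist (f n) (f (n+k)) ≤ k := by
    have := SimpleGraph.dist_le (rayWalk f hadj n k)
    rwa [length_rayWalk] at this
  obtain ⟨q, hq⟩ := hT.isConnected.exists_walk_length_eq_dist (f n) (f (n+k))
  obtain ⟨-, huniq⟩ := isTree_iff_existsUnique_path.mp hT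
  obtain ⟨p0, -, hu⟩ := huniq (f n) (f (n+k))
  have heq : q.bypass = rayWalk f hadj n k :=
    (hu q.bypass q.bypass_isPath).trans (hu _ (rayWalk_isPath hT f hadj hnb k n)).symm
  have := q.length_bypass_le
  rw [heq, length_rayWalk, hq] at this
  omega

end SlopeRay


/-- Construction of geodesic rays of slope `β`: in a coarsely oriented tree whose edges
change height by at most `M` and in which every vertex has at least two neighbors
higher by at least `β₀` and at least two neighbors lower by at least `β₀`, through
every edge increasing height by at least `β₀` there is a geodesic ray of slope
`(β, M)` for every `0 ≤ β ≤ β₀`. -/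
theorem exists_slope_ray {V : Type*} (G : SimpleGraph V) (h : V → ℝ)
    (hT : G.IsTree) (hlf : ∀ v, (G.neighborSet v).Finite)
    (β₀ M : ℝ) (hβ₀ : 0 < β₀) (hM : 0 < M)
    (hedge : ∀ u v : V, G.Adj u v → |h u - h v| ≤ M)
    (hup : ∀ v : V, ∃ u u' : V, u ≠ u' ∧ G.Adj v u ∧ G.Adj v u' ∧
      β₀ ≤ h u - h v ∧ β₀ ≤ h u' - h v)
    (hdown : ∀ v : V, ∃ u u' : V, u ≠ u' ∧ G.Adj v u ∧ G.Adj v u' ∧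
      β₀ ≤ h v - h u ∧ β₀ ≤ h v - h u') :
    ∀ v w : V, G.Adj v w → β₀ ≤ h w - h v → ∀ β : ℝ, 0 ≤ β → β ≤ β₀ →
      ∃ r : ℕ → V, r 0 = v ∧ r 1 = w ∧
        (∀ n m : ℕ, G.dist (r n) (r m) = ((n : ℤ) - (m : ℤ)).natAbs) ∧
        (∀ n : ℕ, |h (r n) - h v - β * n| ≤ M) := by
  intro v w hvw hwv β hβ0 hββ₀
  classical
  have hup' : ∀ x p : V, ∃ u, G.Adj x u ∧ u ≠ p ∧ β₀ ≤ h u - h x := by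
    intro x p
    obtain ⟨u, u', hne, a1, a2, b1, b2⟩ := hup x
    by_cases hc : u = p
    · exact ⟨u', a2, fun hh => hne (by rw [hc, hh]), b2⟩
    · exact ⟨u, a1, hc, b1⟩
  have hdown' : ∀ x p : V, ∃ u, G.Adj x u ∧ u ≠ p ∧ β₀ ≤ h x - h u := by
    intro x p
    obtain ⟨u, u', hne, a1, a2, b1, b2⟩ := hdown x
    by_cases hc : u = p
    · exact ⟨u', a2, fun hh => hne (by rw [hc, hh]), b2⟩
    · exact ⟨u, a1, hc, b1⟩
  choose fup hup1 hup2 hup3 using hup'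
  choose fdn hdn1 hdn2 hdn3 using hdown'
  let step : ℕ → V → V → V := fun n p x =>
    if h x - h v - β * n ≤ β then fup x p else fdn x p
  let s : ℕ → V × V := fun n => Nat.rec (v, w) (fun m q => (q.2, step (m+1) q.1 q.2)) n
  let r : ℕ → V := fun n => (s n).1
  have hr0 : r 0 = v := rfl
  have hr1 : r 1 = w := rfl
  have hrs : ∀ n, r (n+1) = (s n).2 := fun n => rfl
  have hstep : ∀ n, r (n+2) = step (n+1) (s n).1 (s n).2 := fun n => rfl
  have hadj : ∀ n, G.Adj (r n) (r (n+1)) := by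
    intro n
    match n with
    | 0 => exact hvw
    | (m+1) =>
      rw [hrs (m+1), show (s (m+1)).2 = step (m+1) (s m).1 (s m).2 from rfl,
        show r (m+1) = (s m).2 from rfl]
      dsimp only [step]
      split
      · exact hup1 _ _
      · exact hdn1 _ _
  have hnb : ∀ n, r (n+2) ≠ r n := by
    intro n
    rw [hstep n, show r n = (s n).1 from rfl]
    dsimp only [step]
    split
    · exact hup2 _ _
    · exact hdn2 _ _
  have hedge' : ∀ u u' : V, G.Adj u u' → h u' - h u ≤ M := by
    intro u u' ha
    have := hedge u u' ha
    rw [abs_le] at this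
    linarith [this.1]
  have hE : ∀ n : ℕ, -M ≤ h (r (n+1)) - h v - β * (n+1 : ℕ) ∧
      h (r (n+1)) - h v - β * (n+1 : ℕ) ≤ M := by
    intro n
    induction n with
    | zero =>
      rw [show r (0+1) = w from hr1]
      have h1 : h w - h v ≤ M := hedge' v w hvw
      push_cast
      constructor <;> nlinarith
    | succ m ih =>
      obtain ⟨ihl, ihr⟩ := ih
      have hx : r (m+1) = (s m).2 := rfl
      rw [hstep m]
      dsimp only [step]
      split
      next hc =>
        rw [← hx] at hc
        have b1 : β₀ ≤ h (fup ((s m).2) ((s m).1)) - h ((s m).2) := hup3 _ _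
        have b2 : h (fup ((s m).2) ((s m).1)) - h ((s m).2) ≤ M :=
          hedge' _ _ (hup1 _ _)
        rw [← hx] at b1 b2
        push_cast at hc ihl ihr ⊢
        constructor <;> nlinarith
      next hc =>
        rw [← hx] at hc
        push_neg at hc
        have b1 : β₀ ≤ h ((s m).2) - h (fdn ((s m).2) ((s m).1)) := hdn3 _ _
        have b2 : h ((s m).2) - h (fdn ((s m).2) ((s m).1)) ≤ M := by
          have := hedge _ _ (hdn1 ((s m).2) ((s m).1))
          rw [abs_le] at this
          linarith [this.2]
        rw [← hx] at b1 b2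
        push_cast at hc ihl ihr ⊢
        constructor <;> nlinarith
  refine ⟨r, hr0, hr1, ?_, ?_⟩
  · intro n m
    rcases le_total n m with hnm | hnm
    · have := SlopeRay.rayWalk_dist hT r hadj hnb n (m - n)
      rw [show n + (m - n) = m by omega] at this
      omega
    · have := SlopeRay.rayWalk_dist hT r hadj hnb m (n - m)
      rw [show m + (n - m) = n by omega] at this
      rw [SimpleGraph.dist_comm]
      omega
  · intro n
    match n with
    | 0 =>
      rw [hr0]
      simp
      positivity
    | (m+1) =>
      obtain ⟨l, u⟩ := hE m
      rw [abs_le]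
      exact ⟨l, u⟩
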